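/- Let C = diag(c₁,…,c_{2n}) be a diagonal 2n×2n matrix over F whose entries satisfy c_k c_{k′} = λ for all k = 1,…,2n, for some fixed λ ≠ 0. Then C satisfies the reflection equation R C₁ R^u C₂ = C₂ R^u C₁ R in End(F^{2n}) ⊗ End(F^{2n}). In particular, taking C = J = Σ_k ε_k e_{kk} (so λ = −1), one has R J₁ R^u J₂ = J₂ R^u J₁ R. -/

import Mathlib

open scoped Kronecker

set_option synthInstance.maxHeartbeats 1000000
set_option maxHeartbeats 1000000

noncomputable section

namespace CI

abbrev F : Type := RatFunc ℂ

def q : F := RatFunc.X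

def pr (n : ℕ) (i : Fin (2*n)) : Fin (2*n) := ⟨2*n - 1 - i.val, by have := i.isLt; omega⟩

def eps (n : ℕ) (i : Fin (2*n)) : F := if (i : ℕ) < n then 1 else -1

def bar (n : ℕ) (i : Fin (2*n)) : ℤ :=
  if (i : ℕ) < n then (n : ℤ) - (i : ℕ) else (n : ℤ) - (i : ℕ) - 1

def E (n : ℕ) (i j : Fin (2*n)) : Matrix (Fin (2*n)) (Fin (2*n)) F :=
  Matrix.single i j 1

/-- The R-matrix of type CI, as an element of End(F^{2n}) ⊗ End(F^{2n}). -/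
def Rmat (n : ℕ) : Matrix (Fin (2*n) × Fin (2*n)) (Fin (2*n) × Fin (2*n)) F :=
  (∑ i, ∑ j, q ^ ((if i = j then (1:ℤ) else 0) - (if i = pr n j then (1:ℤ) else 0)) •
      (E n i i ⊗ₖ E n j j))
  + (q - q⁻¹) • (∑ i, ∑ j, if i < j then E n i j ⊗ₖ E n j i else 0)
  - (q - q⁻¹) • (∑ i, ∑ j, if i < j then
      (q ^ (bar n j - bar n i) * eps n i * eps n j) • (E n i j ⊗ₖ E n (pr n i) (pr n j)) else 0)


/-- The partial transpose of R in the first tensor factor: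
    (R^u)_{(i,a),(j,b)} = R_{(j,a),(i,b)}. -/
def Ru (n : ℕ) : Matrix (Fin (2*n) × Fin (2*n)) (Fin (2*n) × Fin (2*n)) F :=
  Matrix.of fun p s => Rmat n (s.1, p.2) (p.1, s.2)

/-- The matrix J = Σ_k ε_k e_{kk}. -/
def Jm (n : ℕ) : Matrix (Fin (2*n)) (Fin (2*n)) F :=
  Matrix.diagonal (eps n)

def tt : F := q - q⁻¹
def al (n : ℕ) (x y : Fin (2*n)) : F :=
  q ^ ((if x = y then (1:ℤ) else 0) - (if x = pr n y then (1:ℤ) else 0))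
def be (n : ℕ) (x z : Fin (2*n)) : F := q ^ (bar n z - bar n x) * eps n x * eps n z


lemma csum1 {N : ℕ} (P : Fin N → Prop) [DecidablePred P] (a : Fin N) (f : Fin N → F)
    (hP : ∀ v, P v → v = a) :
    (∑ v, if P v then f v else 0) = if P a then f a else 0 :=
  Finset.sum_eq_single a (fun b _ hb => if_neg fun h => hb (hP b h))
    (fun h => absurd (Finset.mem_univ a) h)

lemma csum2 {N : ℕ} (P : Fin N → Fin N → Prop) [∀ u v, Decidable (P u v)]
    (a b : Fin N) (f : Fin N → Fin N → F)
    (hP : ∀ u v, P u v → u = a ∧ v = b) :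
    (∑ u, ∑ v, if P u v then f u v else 0) = if P a b then f a b else 0 := by
  rw [Finset.sum_eq_single a (fun u _ hu => Finset.sum_eq_zero fun v _ =>
      if_neg fun h => hu (hP u v h).1) (fun h => absurd (Finset.mem_univ a) h)]
  exact Finset.sum_eq_single b (fun v _ hv => if_neg fun h => hv (hP a v h).2)
    (fun h => absurd (Finset.mem_univ b) h)

lemma Rmat_apply (n : ℕ) (x y z w : Fin (2*n)) :
    Rmat n (x,y) (z,w) = (if x = z ∧ y = w then al n x y else 0)
      + (if x < y ∧ z = y ∧ w = x then tt else 0)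
      - (if x < z ∧ y = pr n x ∧ w = pr n z then tt * be n x z else 0) := by
  simp only [Rmat, Matrix.sub_apply, Matrix.add_apply, Matrix.smul_apply, Matrix.sum_apply,
    apply_ite (fun M : Matrix (Fin (2*n) × Fin (2*n)) (Fin (2*n) × Fin (2*n)) F => M (x,y) (z,w)), Matrix.zero_apply, Matrix.kroneckerMap_apply, E,
    Matrix.single, Matrix.of_apply, smul_eq_mul,
    ite_and, mul_ite, ite_mul, mul_zero, zero_mul, mul_one, one_mul,
    Finset.sum_ite_eq, Finset.sum_ite_eq', Finset.mem_univ, if_true]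
  simp only [← ite_and]
  rw [csum1 _ x _ (by tauto), csum2 _ x y _ (by tauto), csum2 _ x z _ (by tauto)]
  simp only [mul_ite, mul_one, mul_zero]
  congr 1
  · congr 1
    · exact if_congr (by tauto) rfl rfl
    · exact if_congr (by constructor <;> (rintro ⟨h1, h2, h3⟩ <;> tauto)) rfl rfl
  · refine if_congr ?_ rfl rfl
    constructor
    · rintro ⟨h1, h2, h3, -, -⟩; exact ⟨h1, h2.symm, h3.symm⟩
    · rintro ⟨h1, h2, h3⟩; exact ⟨h1, h2.symm, h3.symm, trivial, trivial⟩

lemma pr_pr (n : ℕ) (x : Fin (2*n)) : pr n (pr n x) = x := by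
  have := x.isLt; simp only [pr]; exact Fin.ext (by simp; omega)

@[simp] lemma pr_ne (n : ℕ) (x : Fin (2*n)) : (x = pr n x) ↔ False := by
  have := x.isLt
  simp only [pr, Fin.ext_iff, iff_false]; simp; omega

@[simp] lemma pr_ne' (n : ℕ) (x : Fin (2*n)) : (pr n x = x) ↔ False := by
  have := x.isLt
  simp only [pr, Fin.ext_iff, iff_false]; simp; omega

lemma pr_inj {n : ℕ} {x y : Fin (2*n)} (h : pr n x = pr n y) : x = y := by
  have := x.isLt; have := y.isLt
  simp only [pr, Fin.ext_iff] at h ⊢; omega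

lemma ite_split_add (P : Prop) [Decidable P] (x y : F) :
    (if P then x + y else 0) = (if P then x else 0) + (if P then y else 0) := by
  split <;> simp

lemma ite_split_sub (P : Prop) [Decidable P] (x y : F) :
    (if P then x - y else 0) = (if P then x else 0) - (if P then y else 0) := by
  split <;> simp

lemma expandL (n : ℕ) (c : Fin (2*n) → F) (i a j b : Fin (2*n)) :
    (∑ u : Fin (2*n) × Fin (2*n), Rmat n (i,a) u * c u.1 * Rmat n (j, u.2) (u.1, b))
    = (((if j = i ∧ a = b then al n i a * c i * al n j a else 0) +
        if (j = a ∧ i = b) ∧ i < a then tt * c a * al n j i else 0) -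
        if pr n j = b ∧ i < j ∧ a = pr n i then tt * be n i j * c j * al n j (pr n j) else 0) +
      ((if j < a ∧ i = a ∧ b = j then al n i a * c i * tt else 0) +
        if (j < i ∧ a = i ∧ b = j) ∧ i < a then tt * c a * tt else 0) -
      ((if j < i ∧ a = pr n j ∧ b = pr n i then al n i a * c i * (tt * be n j i) else 0) +
        if (j < a ∧ i = pr n j ∧ b = pr n a) ∧ i < a then tt * c a * (tt * be n j a) else 0) := by
  rw [Fintype.sum_prod_type]
  simp only [Rmat_apply, add_mul, sub_mul, mul_add, mul_sub, ite_mul, mul_ite,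
    zero_mul, mul_zero, ite_split_add, ite_split_sub, ← ite_and,
    Finset.sum_add_distrib, Finset.sum_sub_distrib]
  rw [show (∑ x : Fin (2*n), ∑ x_1 : Fin (2*n),
        if (j = x ∧ x_1 = b) ∧ i = x ∧ a = x_1 then al n i a * c x * al n j x_1 else 0)
      = _ from csum2 _ i a _ (by tauto)]
  rw [show (∑ x : Fin (2*n), ∑ x_1 : Fin (2*n),
        if (j = x ∧ x_1 = b) ∧ i < a ∧ x = a ∧ x_1 = i then tt * c x * al n j x_1 else 0)
      = _ from csum2 _ a i _ (by tauto)]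
  rw [show (∑ x : Fin (2*n), ∑ x_1 : Fin (2*n),
        if (j = x ∧ x_1 = b) ∧ i < x ∧ a = pr n i ∧ x_1 = pr n x then
          tt * be n i x * c x * al n j x_1 else 0)
      = _ from csum2 _ j (pr n j) _ (by
          rintro u v ⟨⟨h1, h2⟩, -, -, h3⟩; exact ⟨h1.symm, h1 ▸ h3⟩)]
  rw [show (∑ x : Fin (2*n), ∑ x_1 : Fin (2*n),
        if (j < x_1 ∧ x = x_1 ∧ b = j) ∧ i = x ∧ a = x_1 then al n i a * c x * tt else 0)
      = _ from csum2 _ i a _ (by tauto)]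
  rw [show (∑ x : Fin (2*n), ∑ x_1 : Fin (2*n),
        if (j < x_1 ∧ x = x_1 ∧ b = j) ∧ i < a ∧ x = a ∧ x_1 = i then tt * c x * tt else 0)
      = _ from csum2 _ a i _ (by tauto)]
  rw [show (∑ x : Fin (2*n), ∑ x_1 : Fin (2*n),
        if (j < x_1 ∧ x = x_1 ∧ b = j) ∧ i < x ∧ a = pr n i ∧ x_1 = pr n x then
          tt * be n i x * c x * tt else 0)
      = _ from csum2 _ i i _ (by
          rintro u v ⟨⟨-, h1, -⟩, -, -, h2⟩; exact absurd (h1.trans h2) (by simp))]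
  rw [show (∑ x : Fin (2*n), ∑ x_1 : Fin (2*n),
        if (j < x ∧ x_1 = pr n j ∧ b = pr n x) ∧ i = x ∧ a = x_1 then
          al n i a * c x * (tt * be n j x) else 0)
      = _ from csum2 _ i a _ (by tauto)]
  rw [show (∑ x : Fin (2*n), ∑ x_1 : Fin (2*n),
        if (j < x ∧ x_1 = pr n j ∧ b = pr n x) ∧ i < a ∧ x = a ∧ x_1 = i then
          tt * c x * (tt * be n j x) else 0)
      = _ from csum2 _ a i _ (by tauto)]
  rw [show (∑ x : Fin (2*n), ∑ x_1 : Fin (2*n),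
        if (j < x ∧ x_1 = pr n j ∧ b = pr n x) ∧ i < x ∧ a = pr n i ∧ x_1 = pr n x then
          tt * be n i x * c x * (tt * be n j x) else 0)
      = _ from csum2 _ j (pr n j) _ (by
          rintro u v ⟨⟨-, h1, -⟩, -, -, h2⟩; exact ⟨(pr_inj (h1.symm.trans h2)).symm, h1⟩)]
  simp only [eq_self_iff_true, true_and, and_true, pr_ne, pr_ne', lt_self_iff_false,
    false_and, and_false, if_false, sub_zero, add_zero, zero_sub, zero_add]

lemma expandR (n : ℕ) (c : Fin (2*n) → F) (i a j b : Fin (2*n)) :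
    (∑ u : Fin (2*n) × Fin (2*n), Rmat n (u.1, a) (i, u.2) * c u.1 * Rmat n (u.1, u.2) (j, b))
    = (((if i = j ∧ a = b then al n i a * c i * al n i a else 0) +
        if j = b ∧ j < a ∧ i = a then tt * c j * al n j j else 0) -
        if pr n i = b ∧ j < i ∧ a = pr n j then tt * be n j i * c j * al n j (pr n i) else 0) +
      ((if i < a ∧ j = a ∧ b = i then al n i a * c i * tt else 0) -
        if (pr n a < pr n i ∧ j = pr n i ∧ b = pr n a) ∧ pr n a < i then
          tt * be n (pr n a) i * c (pr n a) * tt else 0) -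
      ((if (i < j ∧ b = pr n j) ∧ a = pr n i then al n i a * c i * (tt * be n i j) else 0) -
        if (pr n a < j ∧ pr n i = a ∧ b = pr n j) ∧ pr n a < i then
          tt * be n (pr n a) i * c (pr n a) * (tt * be n (pr n a) j) else 0) := by
  rw [Fintype.sum_prod_type]
  simp only [Rmat_apply, add_mul, sub_mul, mul_add, mul_sub, ite_mul, mul_ite,
    zero_mul, mul_zero, ite_split_add, ite_split_sub, ← ite_and,
    Finset.sum_add_distrib, Finset.sum_sub_distrib]
  rw [show (∑ x : Fin (2*n), ∑ x_1 : Fin (2*n),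
        if (x = j ∧ x_1 = b) ∧ x = i ∧ a = x_1 then al n x a * c x * al n x x_1 else 0)
      = _ from csum2 _ i a _ (by tauto)]
  rw [show (∑ x : Fin (2*n), ∑ x_1 : Fin (2*n),
        if (x = j ∧ x_1 = b) ∧ x < a ∧ i = a ∧ x_1 = x then tt * c x * al n x x_1 else 0)
      = _ from csum2 _ j j _ (by
          rintro u v ⟨⟨h1, -⟩, -, -, h2⟩; exact ⟨h1, h2.trans h1⟩)]
  rw [show (∑ x : Fin (2*n), ∑ x_1 : Fin (2*n),
        if (x = j ∧ x_1 = b) ∧ x < i ∧ a = pr n x ∧ x_1 = pr n i then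
          tt * be n x i * c x * al n x x_1 else 0)
      = _ from csum2 _ j (pr n i) _ (by tauto)]
  rw [show (∑ x : Fin (2*n), ∑ x_1 : Fin (2*n),
        if (x < x_1 ∧ j = x_1 ∧ b = x) ∧ x = i ∧ a = x_1 then al n x a * c x * tt else 0)
      = _ from csum2 _ i a _ (by tauto)]
  rw [show (∑ x : Fin (2*n), ∑ x_1 : Fin (2*n),
        if (x < x_1 ∧ j = x_1 ∧ b = x) ∧ x < a ∧ i = a ∧ x_1 = x then tt * c x * tt else 0)
      = _ from csum2 _ i i _ (by
          rintro u v ⟨⟨h1, -, -⟩, -, -, h2⟩; exact absurd (h2 ▸ h1) (lt_irrefl _))]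
  rw [show (∑ x : Fin (2*n), ∑ x_1 : Fin (2*n),
        if (x < x_1 ∧ j = x_1 ∧ b = x) ∧ x < i ∧ a = pr n x ∧ x_1 = pr n i then
          tt * be n x i * c x * tt else 0)
      = _ from csum2 _ (pr n a) (pr n i) _ (by
          rintro u v ⟨⟨-, -, -⟩, -, h3, h4⟩; exact ⟨by rw [h3, pr_pr], h4⟩)]
  rw [show (∑ x : Fin (2*n), ∑ x_1 : Fin (2*n),
        if (x < j ∧ x_1 = pr n x ∧ b = pr n j) ∧ x = i ∧ a = x_1 then
          al n x a * c x * (tt * be n x j) else 0)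
      = _ from csum2 _ i (pr n i) _ (by
          rintro u v ⟨⟨-, h1, -⟩, h2, -⟩; exact ⟨h2, by rw [h1, h2]⟩)]
  rw [show (∑ x : Fin (2*n), ∑ x_1 : Fin (2*n),
        if (x < j ∧ x_1 = pr n x ∧ b = pr n j) ∧ x < a ∧ i = a ∧ x_1 = x then
          tt * c x * (tt * be n x j) else 0)
      = _ from csum2 _ i i _ (by
          rintro u v ⟨⟨-, h1, -⟩, -, -, h2⟩; exact absurd (h2.symm.trans h1) (by simp))]
  rw [show (∑ x : Fin (2*n), ∑ x_1 : Fin (2*n),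
        if (x < j ∧ x_1 = pr n x ∧ b = pr n j) ∧ x < i ∧ a = pr n x ∧ x_1 = pr n i then
          tt * be n x i * c x * (tt * be n x j) else 0)
      = _ from csum2 _ (pr n a) (pr n i) _ (by
          rintro u v ⟨⟨-, -, -⟩, -, h3, h4⟩; exact ⟨by rw [h3, pr_pr], h4⟩)]
  simp only [eq_self_iff_true, true_and, and_true, pr_ne, pr_ne', pr_pr, lt_self_iff_false,
    false_and, and_false, if_false, sub_zero, add_zero, zero_sub, zero_add]

@[simp] lemma pr_val (n : ℕ) (x : Fin (2*n)) : (pr n x).val = 2*n - 1 - x.val := rfl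

lemma pr_eq_comm {n : ℕ} {x y : Fin (2*n)} : x = pr n y ↔ y = pr n x := by
  constructor <;> (intro h; rw [h, pr_pr])

lemma bar_pr (n : ℕ) (x : Fin (2*n)) : bar n (pr n x) = - bar n x := by
  have := x.isLt
  simp only [bar, pr_val]; split_ifs <;> omega

lemma eps_pr (n : ℕ) (x : Fin (2*n)) : eps n (pr n x) = - eps n x := by
  have := x.isLt
  simp only [eps, pr_val]
  by_cases h1 : (x:ℕ) < n <;> by_cases h2 : 2*n-1-(x:ℕ) < n <;> simp only [h1, h2, if_true, if_false] <;> first | (exfalso; omega) | norm_num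

lemma eps_sq (n : ℕ) (x : Fin (2*n)) : eps n x * eps n x = 1 := by
  simp only [eps]; split_ifs <;> norm_num

lemma al_self (n : ℕ) (x : Fin (2*n)) : al n x x = q ^ (1:ℤ) := by simp [al]

lemma al_pr_self (n : ℕ) (x : Fin (2*n)) : al n x (pr n x) = q ^ (-1:ℤ) := by
  simp [al, pr_pr]

lemma al_symm (n : ℕ) (x y : Fin (2*n)) : al n x y = al n y x := by
  unfold al
  rw [show (if x = y then (1:ℤ) else 0) = (if y = x then 1 else 0) from
        if_congr eq_comm rfl rfl,
      show (if x = pr n y then (1:ℤ) else 0) = (if y = pr n x then 1 else 0) from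
        if_congr pr_eq_comm rfl rfl]

lemma al_pr_comm (n : ℕ) (x y : Fin (2*n)) : al n x (pr n y) = al n y (pr n x) := by
  unfold al
  rw [show (if x = pr n y then (1:ℤ) else 0) = (if y = pr n x then 1 else 0) from
        if_congr pr_eq_comm rfl rfl,
      show (if x = pr n (pr n y) then (1:ℤ) else 0) = (if y = pr n (pr n x) then 1 else 0) from
        by rw [pr_pr, pr_pr]; exact if_congr eq_comm rfl rfl]

lemma be_pr_pr (n : ℕ) (x y : Fin (2*n)) : be n (pr n x) (pr n y) = be n y x := by
  simp only [be, bar_pr, eps_pr]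
  rw [show -bar n y - -bar n x = bar n x - bar n y from by ring]
  ring

lemma key (n : ℕ) (c : Fin (2*n) → F)
    (hcc : ∀ k l : Fin (2*n), c k * c (pr n k) = c l * c (pr n l)) (i a j b : Fin (2*n)) :
    (∑ u : Fin (2*n) × Fin (2*n), Rmat n (i,a) u * c u.1 * Rmat n (j, u.2) (u.1, b)) * c b
    = c a * ∑ u : Fin (2*n) × Fin (2*n),
        Rmat n (u.1, a) (i, u.2) * c u.1 * Rmat n (u.1, u.2) (j, b) := by
  rw [expandL, expandR]
  have hi := i.isLt; have ha := a.isLt; have hj := j.isLt; have hb := b.isLt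
  have e1 : (if j = i ∧ a = b then al n i a * c i * al n j a else 0) * c b
      = c a * (if i = j ∧ a = b then al n i a * c i * al n i a else 0) := by
    split_ifs with h1 h2 h2
    · obtain ⟨h, h'⟩ := h1; subst h; subst h'; ring
    · exfalso; simp only [Fin.lt_def, Fin.ext_iff, pr_val] at h1 h2; omega
    · exfalso; simp only [Fin.lt_def, Fin.ext_iff, pr_val] at h1 h2; omega
    · ring
  have e2 : (if (j = a ∧ i = b) ∧ i < a then tt * c a * al n j i else 0) * c b
      = c a * (if i < a ∧ j = a ∧ b = i then al n i a * c i * tt else 0) := by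
    split_ifs with h1 h2 h2
    · obtain ⟨⟨h, h'⟩, -⟩ := h1; subst h; subst h'; rw [al_symm n j i]; ring
    · exfalso; simp only [Fin.lt_def, Fin.ext_iff, pr_val] at h1 h2; omega
    · exfalso; simp only [Fin.lt_def, Fin.ext_iff, pr_val] at h1 h2; omega
    · ring
  have e3 : (if pr n j = b ∧ i < j ∧ a = pr n i then tt * be n i j * c j * al n j (pr n j) else 0) * c b
      = c a * (if (i < j ∧ b = pr n j) ∧ a = pr n i then al n i a * c i * (tt * be n i j) else 0) := by
    split_ifs with h1 h2 h2
    · obtain ⟨h, -, h'⟩ := h1; subst h'; subst h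
      rw [al_pr_self, al_pr_self]
      linear_combination tt * be n i j * q ^ (-1:ℤ) * hcc j i
    · exfalso; simp only [Fin.lt_def, Fin.ext_iff, pr_val] at h1 h2; omega
    · exfalso; simp only [Fin.lt_def, Fin.ext_iff, pr_val] at h1 h2; omega
    · ring
  have e4 : (if j < a ∧ i = a ∧ b = j then al n i a * c i * tt else 0) * c b
      = c a * (if j = b ∧ j < a ∧ i = a then tt * c j * al n j j else 0) := by
    split_ifs with h1 h2 h2
    · obtain ⟨-, h, h'⟩ := h1; subst h; subst h'; rw [al_self, al_self]; ring
    · exfalso; simp only [Fin.lt_def, Fin.ext_iff, pr_val] at h1 h2; omega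
    · exfalso; simp only [Fin.lt_def, Fin.ext_iff, pr_val] at h1 h2; omega
    · ring
  have e5 : (if (j < i ∧ a = i ∧ b = j) ∧ i < a then tt * c a * tt else 0) * c b = 0 := by
    split_ifs with h1
    · exfalso; simp only [Fin.lt_def, Fin.ext_iff, pr_val] at h1; omega
    · exact zero_mul _
  have e6 : (if j < i ∧ a = pr n j ∧ b = pr n i then al n i a * c i * (tt * be n j i) else 0) * c b
      = c a * (if pr n i = b ∧ j < i ∧ a = pr n j then tt * be n j i * c j * al n j (pr n i) else 0) := by
    split_ifs with h1 h2 h2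
    · obtain ⟨-, h, h'⟩ := h1; subst h; subst h'
      rw [al_pr_comm n i j]
      linear_combination al n j (pr n i) * tt * be n j i * hcc i j
    · exfalso; simp only [Fin.lt_def, Fin.ext_iff, pr_val] at h1 h2; omega
    · exfalso; simp only [Fin.lt_def, Fin.ext_iff, pr_val] at h1 h2; omega
    · ring
  have e7 : (if (j < a ∧ i = pr n j ∧ b = pr n a) ∧ i < a then tt * c a * (tt * be n j a) else 0) * c b
      = c a * (if (pr n a < pr n i ∧ j = pr n i ∧ b = pr n a) ∧ pr n a < i then
          tt * be n (pr n a) i * c (pr n a) * tt else 0) := by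
    split_ifs with h1 h2 h2
    · obtain ⟨⟨-, h, h'⟩, -⟩ := h1; subst h; subst h'
      rw [be_pr_pr n a j]; ring
    · exfalso; simp only [Fin.lt_def, Fin.ext_iff, pr_val] at h1 h2; omega
    · exfalso; simp only [Fin.lt_def, Fin.ext_iff, pr_val] at h1 h2; omega
    · ring
  have e8 : c a * (if (pr n a < j ∧ pr n i = a ∧ b = pr n j) ∧ pr n a < i then
      tt * be n (pr n a) i * c (pr n a) * (tt * be n (pr n a) j) else 0) = 0 := by
    split_ifs with h1
    · exfalso; simp only [Fin.lt_def, Fin.ext_iff, pr_val] at h1; omega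
    · exact mul_zero _
  linear_combination e1 + e2 - e3 + e4 + e5 - e6 - e7 - e8

lemma main (n : ℕ) (c : Fin (2*n) → F)
    (hcc : ∀ k l : Fin (2*n), c k * c (pr n k) = c l * c (pr n l)) :
    Rmat n * (Matrix.diagonal c ⊗ₖ (1 : Matrix (Fin (2*n)) (Fin (2*n)) F)) * Ru n *
        ((1 : Matrix (Fin (2*n)) (Fin (2*n)) F) ⊗ₖ Matrix.diagonal c)
      = ((1 : Matrix (Fin (2*n)) (Fin (2*n)) F) ⊗ₖ Matrix.diagonal c) * Ru n *
        (Matrix.diagonal c ⊗ₖ (1 : Matrix (Fin (2*n)) (Fin (2*n)) F)) * Rmat n := by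
  have hD1 : (Matrix.diagonal c ⊗ₖ (1 : Matrix (Fin (2*n)) (Fin (2*n)) F))
      = Matrix.diagonal (fun p : Fin (2*n) × Fin (2*n) => c p.1) := by
    rw [← Matrix.diagonal_one, Matrix.diagonal_kronecker_diagonal]
    simp
  have hD2 : ((1 : Matrix (Fin (2*n)) (Fin (2*n)) F) ⊗ₖ Matrix.diagonal c)
      = Matrix.diagonal (fun p : Fin (2*n) × Fin (2*n) => c p.2) := by
    rw [← Matrix.diagonal_one, Matrix.diagonal_kronecker_diagonal]
    simp
  rw [hD1, hD2]
  ext ⟨i, a⟩ ⟨j, b⟩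
  rw [Matrix.mul_diagonal, Matrix.mul_apply, Matrix.mul_apply]
  simp only [Matrix.mul_diagonal, Matrix.diagonal_mul, Ru, Matrix.of_apply]
  have hk := key n c hcc i a j b
  simp only [Prod.mk.eta] at hk
  rw [hk, Finset.mul_sum]
  exact Finset.sum_congr rfl fun u _ => by ring

/-- any diagonal matrix C = diag(c₁,…,c_{2n}) with c_k c_{k′} = λ ≠ 0 for
    all k satisfies the reflection equation R C₁ R^u C₂ = C₂ R^u C₁ R; in particular this
    holds for C = J = Σ_k ε_k e_{kk}. -/
theorem reflection_equation (n : ℕ) (hn : 2 ≤ n) (c : Fin (2*n) → F) (lam : F)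
    (hlam : lam ≠ 0) (hc : ∀ k, c k * c (pr n k) = lam) :
    (Rmat n * (Matrix.diagonal c ⊗ₖ (1 : Matrix (Fin (2*n)) (Fin (2*n)) F)) * Ru n *
        ((1 : Matrix (Fin (2*n)) (Fin (2*n)) F) ⊗ₖ Matrix.diagonal c)
      = ((1 : Matrix (Fin (2*n)) (Fin (2*n)) F) ⊗ₖ Matrix.diagonal c) * Ru n *
        (Matrix.diagonal c ⊗ₖ (1 : Matrix (Fin (2*n)) (Fin (2*n)) F)) * Rmat n)
    ∧
    (Rmat n * (Jm n ⊗ₖ (1 : Matrix (Fin (2*n)) (Fin (2*n)) F)) * Ru n *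
        ((1 : Matrix (Fin (2*n)) (Fin (2*n)) F) ⊗ₖ Jm n)
      = ((1 : Matrix (Fin (2*n)) (Fin (2*n)) F) ⊗ₖ Jm n) * Ru n *
        (Jm n ⊗ₖ (1 : Matrix (Fin (2*n)) (Fin (2*n)) F)) * Rmat n) := by
  constructor
  · exact main n c fun k l => (hc k).trans (hc l).symm
  · have h : ∀ m : Fin (2*n), eps n m * eps n (pr n m) = -1 := by
      intro m; rw [eps_pr, mul_neg, eps_sq]
    exact main n (eps n) fun k l => (h k).trans (h l).symm


end CI
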